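/- Every nonempty finite subset A of a free abelian group G is part of a co-minimal pair: there exists a subset B of G such that A + B = G, (A \ {a}) + B ≠ G for all a ∈ A, and A + (B \ {b}) ≠ G for all b ∈ B. -/

import Mathlib

open Pointwise

private lemma cover_min {G : Type*} [AddCommGroup G] {A C : Set G} (hA : A.Finite)
    (hC : A + C = Set.univ) :
    ∃ B, B ⊆ C ∧ A + B = Set.univ ∧ ∀ b ∈ B, A + (B \ {b}) ≠ Set.univ := by
  classical
  set S : Set (Set G) := {D | D ⊆ C ∧ A + D = Set.univ} with hS
  have hchain : ∀ ch ⊆ S, IsChain (· ⊆ ·) ch → ch.Nonempty →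
      ∃ lb ∈ S, ∀ s ∈ ch, lb ⊆ s := by
    rintro ch hchS hchain ⟨D₀, hD₀⟩
    refine ⟨⋂₀ ch, ⟨(Set.sInter_subset_of_mem hD₀).trans (hchS hD₀).1, ?_⟩,
      fun s hs => Set.sInter_subset_of_mem hs⟩
    rw [Set.eq_univ_iff_forall]
    intro g
    set T : Set G → Set G := fun D => {a | a ∈ A ∧ g - a ∈ D} with hT
    have hTA : ∀ D, T D ⊆ A := fun D a ha => ha.1
    have hTne : ∀ D ∈ ch, (T D).Nonempty := by
      intro D hD
      have hg : g ∈ A + D := (hchS hD).2 ▸ Set.mem_univ g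
      obtain ⟨a, ha, d, hd, had⟩ := Set.mem_add.mp hg
      exact ⟨a, ha, by rw [show g - a = d by rw [← had]; abel]; exact hd⟩
    have hTmono : ∀ D D' : Set G, D ⊆ D' → T D ⊆ T D' :=
      fun D D' h a ha => ⟨ha.1, h ha.2⟩
    have hfin' : (T '' ch).Finite :=
      Set.Finite.subset hA.finite_subsets (by rintro _ ⟨D, _, rfl⟩; exact hTA D)
    obtain ⟨T₀, hT₀mem, hT₀min⟩ := (show ∃ T₀ ∈ T '' ch, ∀ T' ∈ T '' ch, id T' ≤ id T₀ → id T₀ = id T' by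
      obtain ⟨x, hx⟩ := Set.Finite.exists_minimalFor id (T '' ch) hfin'
        ⟨T D₀, Set.mem_image_of_mem T hD₀⟩
      exact ⟨x, hx.1, fun y hy hle => le_antisymm (hx.2 hy hle) hle⟩)
    obtain ⟨D₁, hD₁, rfl⟩ := hT₀mem
    obtain ⟨a, haA, haD⟩ := hTne D₁ hD₁
    have hall : ∀ D ∈ ch, g - a ∈ D := by
      intro D hD
      rcases eq_or_ne D D₁ with rfl | hne
      · exact haD
      · rcases hchain hD hD₁ hne with h | h
        · have : T D₁ = T D := hT₀min (T D) (Set.mem_image_of_mem T hD) (hTmono _ _ h)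
          have : a ∈ T D := this ▸ (⟨haA, haD⟩ : a ∈ T D₁)
          exact this.2
        · exact (hTmono _ _ h ⟨haA, haD⟩).2
    exact Set.mem_add.mpr ⟨a, haA, g - a, Set.mem_sInter.mpr hall, by abel⟩
  obtain ⟨B, hBsub, hBmin⟩ := zorn_superset_nonempty S hchain C ⟨Set.Subset.rfl, hC⟩
  refine ⟨B, hBmin.prop.1, hBmin.prop.2, ?_⟩
  intro b hb hcov
  have hmem : B \ {b} ∈ S := ⟨Set.diff_subset.trans hBmin.prop.1, hcov⟩
  have := hBmin.le_of_le hmem Set.diff_subset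
  exact (this hb).2 rfl

private lemma digit_lemma (M : ℤ) :
    ∀ (n : ℕ) (f : ℕ → ℤ), (∀ j, |f j| < M) →
      (∑ j ∈ Finset.range n, f j * M ^ j) = 0 → ∀ j < n, f j = 0 := by
  intro n
  induction n with
  | zero => exact fun f _ _ j hj => absurd hj (Nat.not_lt_zero j)
  | succ n ih =>
    intro f hbd hsum j hj
    rw [Finset.sum_range_succ'] at hsum
    have hM : 0 < M := lt_of_le_of_lt (abs_nonneg _) (hbd 0)
    have hrw : (∑ k ∈ Finset.range n, f (k + 1) * M ^ (k + 1)) =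
        M * ∑ k ∈ Finset.range n, f (k + 1) * M ^ k := by
      rw [Finset.mul_sum]; exact Finset.sum_congr rfl fun i _ => by ring
    rw [hrw, pow_zero, mul_one] at hsum
    have h0 : f 0 = 0 := by
      refine Int.eq_zero_of_abs_lt_dvd ⟨-∑ k ∈ Finset.range n, f (k + 1) * M ^ k, ?_⟩ (hbd 0)
      linarith
    have hT : (∑ k ∈ Finset.range n, f (k + 1) * M ^ k) = 0 := by
      have : M * (∑ k ∈ Finset.range n, f (k + 1) * M ^ k) = 0 := by linarith
      exact (mul_eq_zero.mp this).resolve_left (ne_of_gt hM)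
    rcases Nat.eq_zero_or_eq_succ_pred j with rfl | hje
    · exact h0
    · have hj' : j - 1 < n := by omega
      have := ih (fun k => f (k + 1)) (fun k => hbd (k + 1)) hT (j - 1) hj'
      rw [hje]; exact this

private lemma int_comin (A : Set ℤ) (hfin : A.Finite) (hne : A.Nonempty) :
    ∃ B : Set ℤ, A + B = Set.univ ∧ (∀ a ∈ A, (A \ {a}) + B ≠ Set.univ) ∧
      (∀ b ∈ B, A + (B \ {b}) ≠ Set.univ) := by
  classical
  have hAfne : hfin.toFinset.Nonempty := by simpa using hne
  set α := hfin.toFinset.min' hAfne with hαdef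
  set β := hfin.toFinset.max' hAfne with hβdef
  have hbd : ∀ a ∈ A, α ≤ a ∧ a ≤ β := by
    intro a ha
    have ha' : a ∈ hfin.toFinset := hfin.mem_toFinset.mpr ha
    exact ⟨Finset.min'_le _ _ ha', Finset.le_max' _ _ ha'⟩
  have hαA : α ∈ A := hfin.mem_toFinset.mp (hfin.toFinset.min'_mem hAfne)
  have hβA : β ∈ A := hfin.mem_toFinset.mp (hfin.toFinset.max'_mem hAfne)
  set m := β - α with hmdef
  have hm0 : 0 ≤ m := by have := (hbd α hαA).2; linarith
  set D : ℤ := 2 * m + 2 with hDdef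
  have hD0 : 0 < D := by linarith
  set X : Set ℤ := (fun a => D * a) '' A with hXdef
  set cov : ℤ → ℤ := fun y =>
    if ∀ b ∈ A, ¬ (y ≤ D * b ∧ D * b ≤ y + m) then y - α else y - β with hcovdef
  set C : Set ℤ := ((fun a => (D - 1) * a) '' A) ∪ (cov '' Xᶜ) with hCdef
  have hcover : A + C = Set.univ := by
    rw [Set.eq_univ_iff_forall]
    intro g
    by_cases hg : g ∈ X
    · obtain ⟨a0, ha0, rfl⟩ := hg
      exact Set.mem_add.mpr ⟨a0, ha0, (D - 1) * a0, Or.inl ⟨a0, ha0, rfl⟩, by ring⟩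
    · have hgc : cov g ∈ C := Or.inr ⟨g, hg, rfl⟩
      by_cases hcase : ∀ b ∈ A, ¬ (g ≤ D * b ∧ D * b ≤ g + m)
      · refine Set.mem_add.mpr ⟨α, hαA, cov g, hgc, ?_⟩
        simp only [hcovdef]; rw [if_pos hcase]; ring
      · refine Set.mem_add.mpr ⟨β, hβA, cov g, hgc, ?_⟩
        simp only [hcovdef]; rw [if_neg hcase]; ring
  have hanchor : ∀ a ∈ A, ∀ a' ∈ A, ∀ c ∈ C, a' + c = D * a → a' = a := by
    intro a ha a' ha' c hc heq
    have h1 := hbd a' ha'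
    rcases hc with ⟨a'', ha'', rfl⟩ | ⟨y, hy, rfl⟩
    · have h2 := hbd a'' ha''
      have heq' : a' + (D - 1) * a'' = D * a := heq
      have key : D * (a - a'') = a' - a'' := by linear_combination -heq'
      have haa : a = a'' := by
        by_contra hne
        rcases lt_or_gt_of_ne hne with h | h
        · have h' : a - a'' ≤ -1 := by linarith
          have h'' : D * (a - a'') ≤ D * (-1) := mul_le_mul_of_nonneg_left h' hD0.le
          rw [mul_neg_one] at h''
          linarith
        · have h' : (1 : ℤ) ≤ a - a'' := by linarith
          have h'' : D * 1 ≤ D * (a - a'') := mul_le_mul_of_nonneg_left h' hD0.le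
          rw [mul_one] at h''
          linarith
      subst haa
      have : D * (a - a) = 0 := by ring
      rw [this] at key
      linarith
    · by_cases hcase : ∀ b ∈ A, ¬ (y ≤ D * b ∧ D * b ≤ y + m)
      · simp only [hcovdef] at heq; rw [if_pos hcase] at heq
        exact absurd ⟨by linarith, by linarith⟩ (hcase a ha)
      · simp only [hcovdef] at heq; rw [if_neg hcase] at heq
        push_neg at hcase
        obtain ⟨a0, ha0, hy1, hy2⟩ := hcase
        exfalso
        have hDa2 : D * a ≤ y := by linarith
        have hne : D * a ≠ y := fun h => hy ⟨a, ha, h⟩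
        have h3 : D * a + 1 ≤ y := by omega
        have hlt : a < a0 := by
          have : D * a < D * a0 := by linarith
          exact lt_of_mul_lt_mul_left this hD0.le
        have h' : (1 : ℤ) ≤ a0 - a := by linarith
        have h'' : D * 1 ≤ D * (a0 - a) := mul_le_mul_of_nonneg_left h' hD0.le
        have hsub : D * (a0 - a) = D * a0 - D * a := by ring
        rw [mul_one, hsub] at h''
        linarith
  obtain ⟨B, hBC, hBcov, hBmin⟩ := cover_min hfin hcover
  refine ⟨B, hBcov, ?_, hBmin⟩
  intro a ha hEq
  have hm' : (D * a) ∈ (A \ {a}) + B := hEq ▸ Set.mem_univ _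
  obtain ⟨a', ha', b, hb, hab⟩ := Set.mem_add.mp hm'
  exact ha'.2 (Set.mem_singleton_iff.mpr (hanchor a ha a' ha'.1 b (hBC hb) hab))

theorem stmt_8 (I : Type*) (A : Set (I →₀ ℤ)) (hfin : A.Finite) (hne : A.Nonempty) :
    ∃ B : Set (I →₀ ℤ), A + B = Set.univ ∧
      (∀ a ∈ A, (A \ {a}) + B ≠ Set.univ) ∧
      (∀ b ∈ B, A + (B \ {b}) ≠ Set.univ) := by
  classical
  obtain ⟨a₀, ha₀⟩ := hne
  by_cases hsing : ∀ x ∈ A, x = a₀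
  · -- singleton case
    refine ⟨Set.univ, ?_, ?_, ?_⟩
    · rw [Set.eq_univ_iff_forall]
      intro g
      exact Set.mem_add.mpr ⟨a₀, ha₀, g - a₀, trivial, by abel⟩
    · intro a ha hEq
      have hA : A \ {a} = ∅ := by
        ext x
        simp only [Set.mem_diff, Set.mem_singleton_iff, Set.mem_empty_iff_false, iff_false,
          not_and, not_not]
        intro hx
        exact (hsing x hx).trans (hsing a ha).symm
      rw [hA, Set.empty_add] at hEq
      exact Set.empty_ne_univ hEq
    · intro b _ hEq
      have hm : a₀ + b ∈ A + (Set.univ \ {b}) := by rw [hEq]; exact Set.mem_univ _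
      obtain ⟨a, ha, b', hb', heq⟩ := Set.mem_add.mp hm
      rw [hsing a ha] at heq
      exact hb'.2 (Set.mem_singleton_iff.mpr (add_left_cancel heq))
  · push_neg at hsing
    obtain ⟨a₁, ha₁, hne1⟩ := hsing
    set S : Finset I := hfin.toFinset.biUnion (fun a => a.support) with hSdef
    have hsupp : ∀ a ∈ A, ∀ i, a i ≠ 0 → i ∈ S := by
      intro a ha i hi
      exact Finset.mem_biUnion.mpr ⟨a, hfin.mem_toFinset.mpr ha, Finsupp.mem_support_iff.mpr hi⟩
    have hSne : 0 < S.card := by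
      have hex : ∃ i, a₁ i ≠ a₀ i := by
        by_contra h
        push_neg at h
        exact hne1 (Finsupp.ext h)
      obtain ⟨i, hi⟩ := hex
      refine Finset.card_pos.mpr ⟨i, ?_⟩
      rcases ne_or_eq (a₁ i) 0 with h | h
      · exact hsupp a₁ ha₁ i h
      · exact hsupp a₀ ha₀ i (fun h0 => hi (h.trans h0.symm))
    set σ := S.equivFin with hσdef
    set m0 : ℕ := hfin.toFinset.sup (fun a => a.support.sup fun i => (a i).natAbs) with hm0def
    have hbound : ∀ a ∈ A, ∀ i, |a i| ≤ (m0 : ℤ) := by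
      intro a ha i
      rcases eq_or_ne (a i) 0 with h | h
      · simp [h]
      · have h1 : (a i).natAbs ≤ a.support.sup (fun i => (a i).natAbs) :=
          Finset.le_sup (f := fun j => (a j).natAbs) (Finsupp.mem_support_iff.mpr h)
        have h2 : a.support.sup (fun i => (a i).natAbs) ≤ m0 :=
          Finset.le_sup (f := fun a : I →₀ ℤ => a.support.sup fun i => (a i).natAbs)
            (hfin.mem_toFinset.mpr ha)
        rw [Int.abs_eq_natAbs]
        exact_mod_cast h1.trans h2
    set M : ℤ := 2 * (m0 : ℤ) + 1 with hMdef
    set c : I → ℤ := fun i => if h : i ∈ S then M ^ ((σ ⟨i, h⟩ : Fin S.card) : ℕ) else 0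
      with hcdef
    set φ : (I →₀ ℤ) →ₗ[ℤ] ℤ := Finsupp.linearCombination ℤ c with hφdef
    have hsum : ∀ x : I →₀ ℤ, (∀ i, x i ≠ 0 → i ∈ S) → φ x = ∑ i ∈ S, x i * c i := by
      intro x hx
      rw [hφdef, Finsupp.linearCombination_apply]
      rw [Finsupp.sum_of_support_subset x (fun i hi => hx i (Finsupp.mem_support_iff.mp hi)) _
        (fun i _ => zero_smul ℤ (c i))]
      exact Finset.sum_congr rfl fun i _ => by rw [smul_eq_mul]
    have hcval : ∀ j : Fin S.card, c (σ.symm j).1 = M ^ (j : ℕ) := by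
      intro j
      simp only [hcdef]
      rw [dif_pos (σ.symm j).2]
      rw [show (⟨(σ.symm j).1, (σ.symm j).2⟩ : {y // y ∈ S}) = σ.symm j from rfl,
        Equiv.apply_symm_apply]
    have hzero : ∀ x : I →₀ ℤ, (∀ i, x i ≠ 0 → i ∈ S) → (∀ i, |x i| ≤ 2 * (m0 : ℤ)) →
        φ x = 0 → x = 0 := by
      intro x hx hb hphi
      set f : ℕ → ℤ := fun n => if h : n < S.card then x (σ.symm ⟨n, h⟩).1 else 0 with hfdef
      have habs : ∀ n, |f n| < M := by
        intro n
        simp only [hfdef]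
        split
        · exact lt_of_le_of_lt (hb _) (by rw [hMdef]; linarith)
        · rw [abs_zero, hMdef]; positivity
      have hsum2 : ∑ i ∈ S, x i * c i = ∑ n ∈ Finset.range S.card, f n * M ^ n := by
        rw [← Finset.sum_coe_sort S (fun i => x i * c i),
          ← Equiv.sum_comp σ.symm (fun i : {y // y ∈ S} => x i.1 * c i.1),
          ← Fin.sum_univ_eq_sum_range (fun n => f n * M ^ n) S.card]
        refine Finset.sum_congr rfl fun j _ => ?_
        have h2 : f (j : ℕ) = x (σ.symm j).1 := by
          simp only [hfdef]
          rw [dif_pos j.isLt]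
        rw [hcval j, h2]
      have hall := digit_lemma M S.card f habs (by rw [← hsum2, ← hsum x hx]; exact hphi)
      refine Finsupp.ext fun i => ?_
      by_cases hi : i ∈ S
      · have hj := hall (σ ⟨i, hi⟩) (σ ⟨i, hi⟩).isLt
        simp only [hfdef] at hj
        rw [dif_pos (σ ⟨i, hi⟩).isLt] at hj
        rw [show (⟨((σ ⟨i, hi⟩ : Fin S.card) : ℕ), (σ ⟨i, hi⟩).isLt⟩ : Fin S.card)
          = σ ⟨i, hi⟩ from Fin.eta _ _, Equiv.symm_apply_apply] at hj
        exact hj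
      · by_contra h
        exact hi (hx i h)
    have hinj : ∀ a ∈ A, ∀ a' ∈ A, φ a = φ a' → a = a' := by
      intro a ha a' ha' h
      have h1 : ∀ i, (a - a') i ≠ 0 → i ∈ S := by
        intro i hi
        rw [Finsupp.sub_apply] at hi
        rcases ne_or_eq (a i) 0 with h' | h'
        · exact hsupp a ha i h'
        · refine hsupp a' ha' i (fun h0 => hi ?_)
          rw [h', h0, sub_zero]
      have h2 : ∀ i, |(a - a') i| ≤ 2 * (m0 : ℤ) := by
        intro i
        rw [Finsupp.sub_apply]
        calc |a i - a' i| ≤ |a i| + |a' i| := abs_sub _ _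
          _ ≤ (m0 : ℤ) + (m0 : ℤ) := add_le_add (hbound a ha i) (hbound a' ha' i)
          _ = 2 * (m0 : ℤ) := by ring
      have h3 : φ (a - a') = 0 := by rw [map_sub, h, sub_self]
      exact sub_eq_zero.mp (hzero (a - a') h1 h2 h3)
    have hsurj : ∀ n : ℤ, ∃ g : I →₀ ℤ, φ g = n := by
      intro n
      refine ⟨Finsupp.single (σ.symm ⟨0, hSne⟩).1 n, ?_⟩
      rw [hφdef, Finsupp.linearCombination_single]
      rw [show c (σ.symm ⟨0, hSne⟩).1 = M ^ ((⟨0, hSne⟩ : Fin S.card) : ℕ) from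
        hcval ⟨0, hSne⟩]
      simp
    -- apply int lemma
    obtain ⟨B', hB'cov, hB'a, hB'b⟩ := int_comin (φ '' A) (hfin.image φ) ⟨φ a₀, a₀, ha₀, rfl⟩
    refine ⟨φ ⁻¹' B', ?_, ?_, ?_⟩
    · rw [Set.eq_univ_iff_forall]
      intro g
      have hg : φ g ∈ (φ '' A) + B' := hB'cov ▸ Set.mem_univ _
      obtain ⟨a', ⟨a, haA, rfl⟩, b', hb', heq⟩ := Set.mem_add.mp hg
      refine Set.mem_add.mpr ⟨a, haA, g - a, ?_, by abel⟩
      show φ (g - a) ∈ B'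
      rw [map_sub]
      have : φ g - φ a = b' := by linarith
      rw [this]; exact hb'
    · intro a ha hEq
      have hne' := hB'a (φ a) ⟨a, ha, rfl⟩
      rw [Set.ne_univ_iff_exists_notMem] at hne'
      obtain ⟨x, hx⟩ := hne'
      obtain ⟨g, hg⟩ := hsurj x
      have hgm : g ∈ (A \ {a}) + φ ⁻¹' B' := by rw [hEq]; exact Set.mem_univ _
      obtain ⟨α', hα', b, hb, heq⟩ := Set.mem_add.mp hgm
      refine hx (Set.mem_add.mpr ⟨φ α', ⟨⟨α', hα'.1, rfl⟩, ?_⟩, φ b, hb, by rw [← map_add, heq, hg]⟩)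
      simp only [Set.mem_singleton_iff]
      intro hφeq
      exact hα'.2 (Set.mem_singleton_iff.mpr (hinj α' hα'.1 a ha hφeq))
    · intro b hb hEq
      have hne' := hB'b (φ b) hb
      rw [Set.ne_univ_iff_exists_notMem] at hne'
      obtain ⟨x, hx⟩ := hne'
      have hxcov : x ∈ (φ '' A) + B' := hB'cov ▸ Set.mem_univ _
      obtain ⟨a', ⟨a, haA, rfl⟩, b'', hb'', heq⟩ := Set.mem_add.mp hxcov
      have hb''b : b'' = φ b := by
        by_contra hneq
        exact hx (Set.mem_add.mpr ⟨φ a, ⟨a, haA, rfl⟩, b'', ⟨hb'', hneq⟩, heq⟩)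
      have hgm : a + b ∈ A + (φ ⁻¹' B' \ {b}) := by rw [hEq]; exact Set.mem_univ _
      obtain ⟨α', hα', β, hβ, heq2⟩ := Set.mem_add.mp hgm
      have hφβ : φ β = φ b := by
        by_contra hneq
        refine hx (Set.mem_add.mpr ⟨φ α', ⟨α', hα', rfl⟩, φ β, ⟨hβ.1, hneq⟩, ?_⟩)
        rw [← map_add, heq2, map_add, ← hb''b]
        exact heq
      have hφα : φ α' = φ a := by
        have e1 : φ α' + φ β = φ a + φ b := by rw [← map_add, heq2, map_add]
        linarith [hφβ]
      have hαa : α' = a := hinj α' hα' a haA hφα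
      refine hβ.2 (Set.mem_singleton_iff.mpr ?_)
      have := heq2
      rw [hαa] at this
      exact add_left_cancel this
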